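/- Let D be a Dyck word of length 2n (a word over {U, D-step} with nonnegative partial sums, ending at 0). The Dyck words E of length 2n+2 obtained from the word D·d·d (appending two down steps) by changing exactly one down step other than the last one into an up step are exactly n+1 in number. -/

import Mathlib

/-- A Dyck word: every prefix has at least as many up steps (`true`) as down
steps (`false`), and the total numbers of up and down steps are equal. -/
def IsDyck (w : List Bool) : Prop :=
  (∀ p : ℕ, (w.take p).count false ≤ (w.take p).count true) ∧
    w.count false = w.count true

/-- Ribbon addition: `E` is obtained from `D ++ [false, false]` by changing a
single down step, other than the last one, into an up step. -/
def Ribbon (D E : List Bool) : Prop :=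
  ∃ k, k < D.length + 1 ∧ (D ++ [false, false])[k]? = some false ∧
    E = (D ++ [false, false]).set k true

private lemma bool_count (l : List Bool) : l.count false + l.count true = l.length := by
  induction l with
  | nil => simp
  | cons a l ih => cases a <;> simp [List.count_cons] <;> omega

private lemma count_set_true {l : List Bool} {k : ℕ} (h : l[k]? = some false) :
    (l.set k true).count false + 1 = l.count false ∧
    (l.set k true).count true = l.count true + 1 := by
  have hk : k < l.length := by
    rcases Nat.lt_or_ge k l.length with h' | h'
    · exact h'
    · rw [List.getElem?_eq_none h'] at h; simp at h
  have hget : l[k] = false := by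
    rw [List.getElem?_eq_getElem hk] at h
    exact Option.some_injective _ h
  have hl : l = l.take k ++ false :: l.drop (k + 1) := by
    conv_lhs => rw [← List.take_append_drop k l, ← List.getElem_cons_drop hk, hget]
  rw [List.set_eq_take_append_cons_drop, if_pos hk]
  constructor
  · conv_rhs => rw [hl]
    simp [List.count_append, List.count_cons]
    omega
  · conv_rhs => rw [hl]
    simp [List.count_append, List.count_cons]
    omega

private lemma card_filter_count (l : List Bool) :
    ((Finset.range l.length).filter fun k => l[k]? = some false).card = l.count false := by
  induction l using List.reverseRecOn with
  | nil => simp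
  | append_singleton l a ih =>
    have hlen : (l ++ [a]).length = l.length + 1 := by simp
    rw [hlen, Finset.range_add_one, Finset.filter_insert]
    have hfc : (Finset.range l.length).filter (fun k => (l ++ [a])[k]? = some false)
        = (Finset.range l.length).filter (fun k => l[k]? = some false) := by
      apply Finset.filter_congr
      intro k hk
      rw [List.getElem?_append_left (Finset.mem_range.mp hk)]
    have hnm : l.length ∉ (Finset.range l.length).filter
        (fun k => (l ++ [a])[k]? = some false) := by
      intro h
      exact absurd (Finset.mem_range.mp (Finset.mem_filter.mp h).1) (lt_irrefl _)
    rw [List.getElem?_concat_length]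
    cases a with
    | false =>
      rw [if_pos rfl, Finset.card_insert_of_notMem hnm, hfc, ih]
      simp [List.count_append]
    | true =>
      rw [if_neg (by simp), hfc, ih]
      simp [List.count_append]

/-- For a Dyck word `D` of length `2n`, the Dyck words `E` obtained from
`D ++ [↘, ↘]` by changing one down step other than the last one into an up
step are exactly `n + 1` in number. -/
theorem card_ribbon_successors (n : ℕ) (D : List Bool)
    (hD : IsDyck D) (hlen : D.length = 2 * n) :
    {E : List Bool | IsDyck E ∧ Ribbon D E}.ncard = n + 1 := by
  obtain ⟨hpre, hcnt⟩ := hD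
  set W : List Bool := D ++ [false, false] with hW
  have hWlen : W.length = 2 * n + 2 := by simp [hW, hlen]
  have hDf : D.count false = n := by
    have := bool_count D; omega
  have hDt : D.count true = n := by
    have := bool_count D; omega
  have hWf : W.count false = n + 2 := by
    simp [hW, List.count_append, hDf]
  have hWt : W.count true = n := by
    simp [hW, List.count_append, hDt]
  -- uniform bound on prefixes of `W`
  have hB : ∀ p, (W.take p).count false ≤ (W.take p).count true + 2 := by
    intro p
    rcases le_or_gt p (2 * n) with hp | hp
    · rw [hW, List.take_append_of_le_length (by omega)]
      exact le_trans (hpre p) (by omega)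
    · obtain ⟨i, rfl⟩ : ∃ i, p = 2 * n + i := ⟨p - 2 * n, by omega⟩
      rw [hW, show 2 * n + i = D.length + i by omega, List.take_length_add_append,
        List.count_append, List.count_append, hDf, hDt]
      have h1 : (List.take i [false, false]).count false ≤ 2 :=
        le_trans List.count_le_length (by simp [List.length_take])
      omega
  set S : Set ℕ := {k | k < 2 * n + 1 ∧ W[k]? = some false} with hS
  have hmem : ∀ k ∈ S, IsDyck (W.set k true) ∧ Ribbon D (W.set k true) := by
    rintro k ⟨hk1, hk2⟩
    refine ⟨⟨?_, ?_⟩, ⟨k, by omega, hk2, rfl⟩⟩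
    · intro p
      rcases Nat.lt_or_ge k p with hkp | hkp
      · rw [List.take_set]
        have hkp' : (W.take p)[k]? = some false := by
          rw [List.getElem?_take, if_pos hkp]; exact hk2
        obtain ⟨c1, c2⟩ := count_set_true hkp'
        have := hB p
        omega
      · rw [List.take_set, List.set_eq_of_length_le (by simp [List.length_take]; omega),
          hW, List.take_append_of_le_length (by omega)]
        exact hpre p
    · obtain ⟨c1, c2⟩ := count_set_true hk2
      omega
  have himg : {E : List Bool | IsDyck E ∧ Ribbon D E} = (fun k => W.set k true) '' S := by
    ext E
    constructor
    · rintro ⟨hdE, k, hk1, hk2, rfl⟩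
      exact ⟨k, ⟨by omega, hk2⟩, rfl⟩
    · rintro ⟨k, hk, rfl⟩
      exact hmem k hk
  have hinj : Set.InjOn (fun k => W.set k true) S := by
    rintro k ⟨hk1, hk2⟩ j ⟨hj1, hj2⟩ hkj
    by_contra hne
    have h1 : (W.set k true)[k]? = some true :=
      List.getElem?_set_self (by omega)
    have h2 : (W.set j true)[k]? = some false := by
      rw [List.getElem?_set_ne (Ne.symm hne)]; exact hk2
    have hkj' : W.set k true = W.set j true := hkj
    rw [hkj', h2] at h1
    simp at h1
  rw [himg, Set.ncard_image_of_injOn hinj]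
  have hScoe : S = ↑((Finset.range (2 * n + 1)).filter fun k => W[k]? = some false) := by
    ext k
    simp [hS]
  rw [hScoe, Set.ncard_coe_finset]
  have hlen' : (D ++ [false]).length = 2 * n + 1 := by simp [hlen]
  have hfc : (Finset.range (2 * n + 1)).filter (fun k => W[k]? = some false)
      = (Finset.range ((D ++ [false]).length)).filter
          (fun k => (D ++ [false])[k]? = some false) := by
    rw [hlen']
    apply Finset.filter_congr
    intro k hk
    have : W = (D ++ [false]) ++ [false] := by simp [hW]
    rw [this, List.getElem?_append_left (by rw [hlen']; exact Finset.mem_range.mp hk)]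
  rw [hfc, card_filter_count]
  simp [List.count_append, hDf]
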